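/- For every positive integer n, the perfect edge-magic deficiency of the star K_{1,n} is finite: there exists a nonnegative integer l such that K_{1,n} ∪ lK_1 is perfect edge-magic. -/

import Mathlib

/-- `f` is an edge-magic labeling of the graph `G` with valence `k`:
`f` is a bijection from `V(G) ∪ E(G)` onto `{1, …, p + q}` and
`f u + f v + f uv = k` for every edge `uv`. -/
def IsEdgeMagic {V : Type*} [Fintype V] (G : SimpleGraph V)
    (f : V ⊕ G.edgeSet → ℕ) (k : ℕ) : Prop :=
  Set.BijOn f Set.univ (Set.Icc 1 (Fintype.card V + G.edgeSet.ncard)) ∧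
  ∀ u v, ∀ h : G.Adj u v,
    f (Sum.inl u) + f (Sum.inl v) + f (Sum.inr ⟨s(u, v), G.mem_edgeSet.mpr h⟩) = k

/-- `f` is a super edge-magic labeling of `G` with valence `k`: an edge-magic
labeling whose vertex labels are exactly `{1, …, p}`. -/
def IsSuperEdgeMagic {V : Type*} [Fintype V] (G : SimpleGraph V)
    (f : V ⊕ G.edgeSet → ℕ) (k : ℕ) : Prop :=
  IsEdgeMagic G f k ∧ ∀ v, f (Sum.inl v) ∈ Set.Icc 1 (Fintype.card V)

/-- The graph `K_{1,n} ∪ lK_1`: the disjoint union of the star `K_{1,n}`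
(with center `0` and leaves `1, …, n`) and `l` isolated vertices
(`n+1, …, n+l`), on `n + l + 1` vertices. -/
def starUnion (n l : ℕ) : SimpleGraph (Fin (n + l + 1)) where
  Adj u v := (u = 0 ∧ v ≠ 0 ∧ (v : ℕ) ≤ n) ∨ (v = 0 ∧ u ≠ 0 ∧ (u : ℕ) ≤ n)
  symm := ⟨fun u v h => h.symm⟩
  loopless := ⟨fun v h => by rcases h with ⟨h1, h2, _⟩ | ⟨h1, h2, _⟩ <;> exact h2 h1⟩

/-- For a bijection `g : V(G) ∪ E(G) → {1, …, p + q}`, the rational number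
`t(g) = (Σ_{u ∈ V(G)} deg(u)·g(u) + Σ_{e ∈ E(G)} g(e)) / q`. -/
noncomputable def emAvg {V : Type*} [Fintype V] [DecidableEq V] (G : SimpleGraph V)
    [DecidableRel G.Adj] (g : V ⊕ G.edgeSet → ℕ) : ℚ :=
  ((∑ v : V, (G.degree v : ℚ) * (g (Sum.inl v) : ℚ)) +
    ∑ e : G.edgeSet, (g (Sum.inr e) : ℚ)) / (G.edgeSet.ncard : ℚ)

/-- `G` is perfect edge-magic: every integer `k` in the edge-magic interval
`λ_G = [⌈min_g t(g)⌉, ⌊max_g t(g)⌋]` (where `g` ranges over all bijections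
`V(G) ∪ E(G) → {1, …, p + q}`) is the valence of some edge-magic labeling of
`G`.  Here `⌈min_g t(g)⌉ ≤ k` is rendered as `∃ g, ⌈t(g)⌉ ≤ k`, and
`k ≤ ⌊max_g t(g)⌋` as `∃ g, k ≤ ⌊t(g)⌋`, which is equivalent since the ceiling
and floor functions are monotone and the set of bijections is finite and
nonempty. -/
def IsPerfectEdgeMagic {V : Type*} [Fintype V] [DecidableEq V] (G : SimpleGraph V)
    [DecidableRel G.Adj] : Prop :=
  ∀ k : ℕ,
    (∃ g : V ⊕ G.edgeSet → ℕ,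
      Set.BijOn g Set.univ (Set.Icc 1 (Fintype.card V + G.edgeSet.ncard)) ∧
      ⌈emAvg G g⌉ ≤ (k : ℤ)) →
    (∃ g : V ⊕ G.edgeSet → ℕ,
      Set.BijOn g Set.univ (Set.Icc 1 (Fintype.card V + G.edgeSet.ncard)) ∧
      (k : ℤ) ≤ ⌊emAvg G g⌋) →
    ∃ f, IsEdgeMagic G f k

instance (n l : ℕ) : DecidableRel (starUnion n l).Adj := fun u v =>
  inferInstanceAs (Decidable ((u = 0 ∧ v ≠ 0 ∧ (v : ℕ) ≤ n) ∨ (v = 0 ∧ u ≠ 0 ∧ (u : ℕ) ≤ n)))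

def eLeaf (n l : ℕ) : Sym2 (Fin (n + l + 1)) → Fin (n + l + 1) :=
  Sym2.lift ⟨fun u v => max u v, fun u v => max_comm u v⟩

lemma eLeaf_spec {n l : ℕ} {e : Sym2 (Fin (n + l + 1))} (he : e ∈ (starUnion n l).edgeSet) :
    1 ≤ (eLeaf n l e : ℕ) ∧ (eLeaf n l e : ℕ) ≤ n ∧ e = s(0, eLeaf n l e) := by
  induction e with
  | _ u v =>
    rw [SimpleGraph.mem_edgeSet] at he
    rcases he with ⟨h1, h2, h3⟩ | ⟨h1, h2, h3⟩
    · subst h1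
      have hv : eLeaf n l s(0, v) = v := by
        simp [eLeaf, max_eq_right (Fin.zero_le v)]
      rw [hv]
      have : (v : ℕ) ≠ 0 := fun h => h2 (Fin.ext (by simpa using h))
      exact ⟨by omega, h3, rfl⟩
    · subst h1
      have hv : eLeaf n l s(u, 0) = u := by
        simp [eLeaf, max_eq_left (Fin.zero_le u)]
      rw [hv]
      have : (u : ℕ) ≠ 0 := fun h => h2 (Fin.ext (by simpa using h))
      exact ⟨by omega, h3, Sym2.eq_swap⟩

lemma fin_filter_card (m : ℕ) (p : ℕ → Prop) [DecidablePred p] :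
    (Finset.univ.filter (fun v : Fin m => p v.val)).card
      = ((Finset.range m).filter p).card := by
  apply Finset.card_bij (fun v _ => v.val)
  · intro v hv
    simp only [Finset.mem_filter, Finset.mem_range] at *
    exact ⟨v.isLt, hv.2⟩
  · intro a ha b hb h
    exact Fin.ext h
  · intro b hb
    simp only [Finset.mem_filter, Finset.mem_range] at hb
    exact ⟨⟨b, hb.1⟩, by simp [hb.2], rfl⟩

lemma degree_zero (n l : ℕ) : (starUnion n l).degree 0 = n := by
  rw [← SimpleGraph.card_neighborFinset_eq_degree]
  have : (starUnion n l).neighborFinset 0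
      = Finset.univ.filter (fun v : Fin (n+l+1) => 1 ≤ v.val ∧ v.val ≤ n) := by
    ext v
    simp only [SimpleGraph.mem_neighborFinset, Finset.mem_filter, Finset.mem_univ, true_and]
    constructor
    · rintro (⟨h1, h2, h3⟩ | ⟨h1, h2, h3⟩)
      · have : (v : ℕ) ≠ 0 := fun h => h2 (Fin.ext (by simpa using h))
        omega
      · exact absurd rfl h2
    · rintro ⟨h1, h2⟩
      exact Or.inl ⟨rfl, fun h => by simp [h] at h1, h2⟩
  rw [this, fin_filter_card (n+l+1) (fun i => 1 ≤ i ∧ i ≤ n)]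
  have : ((Finset.range (n+l+1)).filter (fun v => 1 ≤ v ∧ v ≤ n)) = Finset.Icc 1 n := by
    ext i; simp only [Finset.mem_filter, Finset.mem_range, Finset.mem_Icc]; omega
  rw [this, Nat.card_Icc]; omega

lemma degree_leaf (n l : ℕ) (v : Fin (n+l+1)) (h1 : 1 ≤ (v:ℕ)) (h2 : (v:ℕ) ≤ n) :
    (starUnion n l).degree v = 1 := by
  rw [← SimpleGraph.card_neighborFinset_eq_degree]
  have : (starUnion n l).neighborFinset v = {0} := by
    ext u
    simp only [SimpleGraph.mem_neighborFinset, Finset.mem_singleton]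
    constructor
    · rintro (⟨hh1, hh2, hh3⟩ | ⟨hh1, hh2, hh3⟩)
      · exfalso; apply absurd hh1; intro h; rw [h] at h1; simp at h1
      · exact hh1
    · rintro rfl
      exact Or.inr ⟨rfl, fun h => by rw [h] at h1; simp at h1, h2⟩
  rw [this]; simp

lemma degree_iso (n l : ℕ) (v : Fin (n+l+1)) (h2 : n < (v:ℕ)) :
    (starUnion n l).degree v = 0 := by
  rw [← SimpleGraph.card_neighborFinset_eq_degree]
  have : (starUnion n l).neighborFinset v = ∅ := by
    ext u
    simp only [SimpleGraph.mem_neighborFinset, Finset.notMem_empty, iff_false]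
    rintro (⟨hh1, hh2, hh3⟩ | ⟨hh1, hh2, hh3⟩)
    · rw [hh1] at h2; simp at h2
    · omega
  rw [this]; simp

lemma range_sum_aux (n : ℕ) (M : ℕ) (hM : n + 1 ≤ M) :
    ∑ i ∈ Finset.range M, (if i = 0 then n else if i ≤ n then 1 else 0) = 2 * n := by
  induction M with
  | zero => omega
  | succ M ih =>
    rcases Nat.lt_or_ge M (n+1) with h | h
    · have hMn : M = n := by omega
      rw [hMn]
      rw [Finset.sum_range_succ']
      have : ∀ i ∈ Finset.range n, (if i + 1 = 0 then n else if i + 1 ≤ n then 1 else 0) = 1 := by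
        intro i hi
        simp only [Finset.mem_range] at hi
        rw [if_neg (by omega), if_pos (by omega)]
      rw [Finset.sum_congr rfl this]
      simp; omega
    · rw [Finset.sum_range_succ, ih h, if_neg (by omega), if_neg (by omega)]
      omega

lemma sum_degrees (n l : ℕ) : ∑ v : Fin (n+l+1), (starUnion n l).degree v = 2 * n := by
  have h1 : ∀ v : Fin (n+l+1), (starUnion n l).degree v
      = (fun i : ℕ => if i = 0 then n else if i ≤ n then 1 else 0) v.val := by
    intro v
    by_cases h0 : (v : ℕ) = 0
    · have : v = 0 := Fin.ext (by simpa using h0)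
      rw [this]; simp [degree_zero]
    · by_cases hn : (v : ℕ) ≤ n
      · rw [degree_leaf n l v (by omega) hn]; simp [h0, hn]
      · rw [degree_iso n l v (by omega)]; simp [h0, hn]
  rw [Finset.sum_congr rfl (fun v _ => h1 v)]
  rw [Fin.sum_univ_eq_sum_range (fun i : ℕ => if i = 0 then n else if i ≤ n then 1 else 0)]
  exact range_sum_aux n (n+l+1) (by omega)

lemma edgeFinset_card (n l : ℕ) : (starUnion n l).edgeFinset.card = n := by
  have := SimpleGraph.sum_degrees_eq_twice_card_edges (starUnion n l)
  rw [sum_degrees] at this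
  omega

lemma edgeSet_ncard (n l : ℕ) : (starUnion n l).edgeSet.ncard = n := by
  rw [Set.ncard_eq_toFinset_card']
  simpa [SimpleGraph.edgeFinset] using edgeFinset_card n l

lemma edgeSet_fintype_card (n l : ℕ) : Fintype.card (starUnion n l).edgeSet = n := by
  rw [← Set.toFinset_card]
  simpa [SimpleGraph.edgeFinset] using edgeFinset_card n l

lemma sum_lower_aux (c : ℕ) : ∀ u : Finset ℕ, u.card = c → (∀ x ∈ u, 1 ≤ x) →
    c * (c + 1) ≤ 2 * ∑ x ∈ u, x := by
  induction c with
  | zero => intro u _ _; simp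
  | succ c ih =>
    intro u hc hpos
    have hne : u.Nonempty := Finset.card_pos.mp (by omega)
    set M := u.max' hne with hM
    have hsub : u ⊆ Finset.Icc 1 M := by
      intro x hx
      rw [Finset.mem_Icc]
      exact ⟨hpos x hx, Finset.le_max' u x hx⟩
    have hcard : c + 1 ≤ M := by
      have := Finset.card_le_card hsub
      rw [hc, Nat.card_Icc] at this
      omega
    have herase : (u.erase M).card = c := by
      rw [Finset.card_erase_of_mem (u.max'_mem hne)]; omega
    have hih := ih (u.erase M) herase (fun x hx => hpos x (Finset.mem_of_mem_erase hx))
    have hsum : ∑ x ∈ u.erase M, x + M = ∑ x ∈ u, x :=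
      Finset.sum_erase_add u _ (u.max'_mem hne)
    nlinarith

lemma sum_upper_aux (N : ℕ) (u : Finset ℕ) (hsub : u ⊆ Finset.Icc 1 N) :
    2 * ∑ x ∈ u, x + u.card * (u.card + 1) ≤ 2 * u.card * (N + 1) := by
  have hmem : ∀ x ∈ u, 1 ≤ x ∧ x ≤ N := by
    intro x hx; have := hsub hx; rwa [Finset.mem_Icc] at this
  set u' := u.image (fun x => N + 1 - x) with hu'
  have hinj : Set.InjOn (fun x => N + 1 - x) u := by
    intro x hx y hy h
    have h1 := hmem x hx; have h2 := hmem y hy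
    simp only at h
    omega
  have hcard : u'.card = u.card := Finset.card_image_of_injOn hinj
  have hsum : ∑ x ∈ u', x = ∑ x ∈ u, (N + 1 - x) := Finset.sum_image (fun x hx y hy h => hinj hx hy h)
  have hsum2 : ∑ x ∈ u, (N + 1 - x) + ∑ x ∈ u, x = u.card * (N + 1) := by
    rw [← Finset.sum_add_distrib]
    have : ∀ x ∈ u, (N + 1 - x) + x = N + 1 := by
      intro x hx; have := hmem x hx; omega
    rw [Finset.sum_congr rfl this, Finset.sum_const, smul_eq_mul]
  have hpos' : ∀ x ∈ u', 1 ≤ x := by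
    intro x hx
    rw [hu', Finset.mem_image] at hx
    obtain ⟨y, hy, rfl⟩ := hx
    have := hmem y hy; omega
  have := sum_lower_aux u'.card u' rfl hpos'
  rw [hsum, hcard] at this
  nlinarith

section
variable (n l : ℕ)

def bigT : Finset (Fin (n+l+1) ⊕ (starUnion n l).edgeSet) :=
  ((Finset.univ.filter (fun v : Fin (n+l+1) => v.val ≤ n)).image Sum.inl)
    ∪ (Finset.univ.image Sum.inr)

lemma bigT_card : (bigT n l).card = 2 * n + 1 := by
  rw [bigT, Finset.card_union_of_disjoint]
  · rw [Finset.card_image_of_injective _ Sum.inl_injective,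
      Finset.card_image_of_injective _ Sum.inr_injective]
    rw [fin_filter_card (n+l+1) (fun i => i ≤ n)]
    have : (Finset.range (n+l+1)).filter (fun i => i ≤ n) = Finset.range (n+1) := by
      ext i; simp only [Finset.mem_filter, Finset.mem_range]; omega
    rw [this, Finset.card_range, Finset.card_univ, edgeSet_fintype_card]
    omega
  · rw [Finset.disjoint_left]
    rintro w hw hw'
    simp only [Finset.mem_image] at hw hw'
    obtain ⟨v, _, rfl⟩ := hw
    obtain ⟨e, _, h⟩ := hw'
    exact Sum.inr_ne_inl h

lemma snum_decomp (hn : 1 ≤ n) (g : Fin (n+l+1) ⊕ (starUnion n l).edgeSet → ℕ) :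
    (∑ v, (starUnion n l).degree v * g (Sum.inl v)) + ∑ e : (starUnion n l).edgeSet, g (Sum.inr e)
      = (n - 1) * g (Sum.inl 0) + ∑ w ∈ bigT n l, g w := by
  classical
  set F := Finset.univ.filter (fun v : Fin (n+l+1) => v.val ≤ n) with hF
  have h0F : (0 : Fin (n+l+1)) ∈ F := by simp [hF]
  have hstep1 : (∑ v, (starUnion n l).degree v * g (Sum.inl v))
      = ∑ v ∈ F, (starUnion n l).degree v * g (Sum.inl v) := by
    rw [eq_comm]
    apply Finset.sum_subset (Finset.subset_univ F)
    intro v _ hv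
    rw [hF, Finset.mem_filter] at hv
    push_neg at hv
    rw [degree_iso n l v (hv (Finset.mem_univ v))]
    simp
  have hstep2 : ∑ v ∈ F, (starUnion n l).degree v * g (Sum.inl v)
      = ∑ v ∈ F, ((if v = 0 then (n-1) * g (Sum.inl v) else 0) + g (Sum.inl v)) := by
    apply Finset.sum_congr rfl
    intro v hv
    rw [hF, Finset.mem_filter] at hv
    by_cases h0 : v = 0
    · subst h0
      rw [degree_zero, if_pos rfl]
      have : (n - 1) * g (Sum.inl 0) + g (Sum.inl 0) = (n - 1 + 1) * g (Sum.inl 0) := by ring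
      rw [this]
      congr 1
      omega
    · have hv1 : 1 ≤ (v : ℕ) := by
        have : (v : ℕ) ≠ 0 := fun h => h0 (Fin.ext (by simpa using h))
        omega
      rw [degree_leaf n l v hv1 hv.2, if_neg h0]
      ring
  have hstep3 : ∑ v ∈ F, ((if v = 0 then (n-1) * g (Sum.inl v) else 0) + g (Sum.inl v))
      = (n-1) * g (Sum.inl 0) + ∑ v ∈ F, g (Sum.inl v) := by
    rw [Finset.sum_add_distrib]
    congr 1
    rw [Finset.sum_ite_eq' F (0 : Fin (n+l+1)) (fun v => (n-1) * g (Sum.inl v))]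
    rw [if_pos h0F]
  have hstep4 : ∑ w ∈ bigT n l, g w
      = ∑ v ∈ F, g (Sum.inl v) + ∑ e : (starUnion n l).edgeSet, g (Sum.inr e) := by
    rw [bigT, Finset.sum_union]
    · congr 1
      · rw [Finset.sum_image (fun x _ y _ h => Sum.inl_injective h)]
      · rw [Finset.sum_image (fun x _ y _ h => Sum.inr_injective h)]
    · rw [Finset.disjoint_left]
      rintro w hw hw'
      simp only [Finset.mem_image] at hw hw'
      obtain ⟨v, _, rfl⟩ := hw
      obtain ⟨e, _, h⟩ := hw'
      exact Sum.inr_ne_inl h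
  rw [hstep1, hstep2, hstep3, hstep4]
  omega

end

lemma snum_bounds (n l : ℕ) (hn : 1 ≤ n)
    (g : Fin (n+l+1) ⊕ (starUnion n l).edgeSet → ℕ)
    (hg : Set.BijOn g Set.univ (Set.Icc 1 (2*n+l+1))) :
    n * (2*n+4) ≤ (∑ v, (starUnion n l).degree v * g (Sum.inl v))
        + ∑ e : (starUnion n l).edgeSet, g (Sum.inr e)
    ∧ (∑ v, (starUnion n l).degree v * g (Sum.inl v))
        + ∑ e : (starUnion n l).edgeSet, g (Sum.inr e) ≤ n * (4*n+3*l+2) := by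
  classical
  set T := bigT n l with hT
  set u := T.image g with hu
  have hinj : Set.InjOn g ↑T := hg.injOn.mono (Set.subset_univ _)
  have hucard : u.card = 2*n+1 := by
    rw [hu, Finset.card_image_of_injOn hinj, bigT_card]
  have husum : ∑ x ∈ u, x = ∑ w ∈ T, g w := by
    rw [hu, Finset.sum_image (fun x hx y hy h => hinj (by simpa using hx) (by simpa using hy) h)]
  have husub : u ⊆ Finset.Icc 1 (2*n+l+1) := by
    intro x hx
    rw [hu, Finset.mem_image] at hx
    obtain ⟨w, _, rfl⟩ := hx
    have := hg.mapsTo (Set.mem_univ w)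
    rw [Set.mem_Icc] at this
    rw [Finset.mem_Icc]
    exact this
  have hlow := sum_lower_aux u.card u rfl (fun x hx => by
    have := husub hx; rw [Finset.mem_Icc] at this; exact this.1)
  have hup := sum_upper_aux (2*n+l+1) u husub
  have hx0 := hg.mapsTo (Set.mem_univ (Sum.inl 0))
  rw [Set.mem_Icc] at hx0
  rw [snum_decomp n l hn g, ← hT]
  rw [← husum] at *
  rw [hucard] at hlow hup
  obtain ⟨m, rfl⟩ : ∃ m, n = m + 1 := ⟨n-1, by omega⟩
  simp only [Nat.add_sub_cancel]
  have hmul : m * g (Sum.inl 0) ≤ m * (2*(m+1)+l+1) := Nat.mul_le_mul_left m hx0.2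
  have hmul2 : m * 1 ≤ m * g (Sum.inl 0) := Nat.mul_le_mul_left m hx0.1
  constructor
  · nlinarith [hlow, hmul2]
  · nlinarith [hup, hmul]

lemma emAvg_bounds (n l : ℕ) (hn : 1 ≤ n)
    (g : Fin (n+l+1) ⊕ (starUnion n l).edgeSet → ℕ)
    (hg : Set.BijOn g Set.univ (Set.Icc 1 (2*n+l+1))) :
    ((2*n+4 : ℕ) : ℚ) ≤ emAvg (starUnion n l) g
      ∧ emAvg (starUnion n l) g ≤ ((4*n+3*l+2 : ℕ) : ℚ) := by
  obtain ⟨h1, h2⟩ := snum_bounds n l hn g hg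
  rw [emAvg, edgeSet_ncard]
  have hnum : ((∑ v : Fin (n+l+1), ((starUnion n l).degree v : ℚ) * (g (Sum.inl v) : ℚ)) +
      ∑ e : (starUnion n l).edgeSet, (g (Sum.inr e) : ℚ))
      = (((∑ v, (starUnion n l).degree v * g (Sum.inl v))
        + ∑ e : (starUnion n l).edgeSet, g (Sum.inr e) : ℕ) : ℚ) := by
    push_cast
    ring
  rw [hnum]
  have hnpos : (0 : ℚ) < (n : ℚ) := by exact_mod_cast hn
  constructor
  · rw [le_div_iff₀ hnpos]
    have : ((n * (2*n+4) : ℕ) : ℚ) ≤ _ := Nat.cast_le.mpr h1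
    calc ((2*n+4 : ℕ):ℚ) * n = ((n * (2*n+4) : ℕ) : ℚ) := by push_cast; ring
    _ ≤ _ := Nat.cast_le.mpr h1
  · rw [div_le_iff₀ hnpos]
    calc ((_ : ℕ) : ℚ) ≤ ((n * (4*n+3*l+2) : ℕ) : ℚ) := Nat.cast_le.mpr h2
    _ = ((4*n+3*l+2 : ℕ):ℚ) * n := by push_cast; ring

lemma iso_card (n l : ℕ) : Fintype.card {v : Fin (n+l+1) // n < (v : ℕ)} = l := by
  rw [Fintype.card_subtype, fin_filter_card (n+l+1) (fun i => n < i)]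
  have : (Finset.range (n+l+1)).filter (fun i => n < i) = Finset.Icc (n+1) (n+l) := by
    ext i; simp only [Finset.mem_filter, Finset.mem_range, Finset.mem_Icc]; omega
  rw [this, Nat.card_Icc]; omega

lemma construct (n l a t s : ℕ) (hn : 1 ≤ n) (ha1 : 1 ≤ a) (haN : a ≤ 2*n+l+1)
    (ht : 1 ≤ t) (hts : 2*t + 2*n - 1 ≤ s) (hsN : s - t ≤ 2*n+l+1)
    (hat : a < t ∨ s - t < a) :
    ∃ f, IsEdgeMagic (starUnion n l) f (a + s) := by
  classical
  set N := 2*n+l+1 with hN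
  set U : Finset ℕ := insert a (Finset.Icc t (t+n-1) ∪ Finset.Icc (s-(t+n-1)) (s-t)) with hU
  have hUmem : ∀ x, x ∈ U ↔ (x = a ∨ (t ≤ x ∧ x ≤ t+n-1) ∨ (s-(t+n-1) ≤ x ∧ x ≤ s-t)) := by
    intro x
    simp [hU, Finset.mem_Icc]
  have hUcard : U.card = 2*n+1 := by
    rw [hU, Finset.card_insert_of_notMem, Finset.card_union_of_disjoint]
    · rw [Nat.card_Icc, Nat.card_Icc]; omega
    · rw [Finset.disjoint_left]
      intro x hx hx'
      rw [Finset.mem_Icc] at hx hx'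
      omega
    · simp only [Finset.mem_union, Finset.mem_Icc]
      omega
  have hUsub : U ⊆ Finset.Icc 1 N := by
    intro x hx
    rw [hUmem] at hx
    rw [Finset.mem_Icc]
    omega
  set C : Finset ℕ := (Finset.Icc 1 N) \ U with hC
  have hCcard : C.card = l := by
    rw [hC, Finset.card_sdiff_of_subset hUsub, hUcard, Nat.card_Icc]
    omega
  have hcards : Fintype.card {v : Fin (n+l+1) // n < (v : ℕ)} = Fintype.card {x // x ∈ C} := by
    rw [iso_card, Fintype.card_coe, hCcard]
  set ψ := Fintype.equivOfCardEq hcards with hψ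
  set f : Fin (n+l+1) ⊕ (starUnion n l).edgeSet → ℕ :=
    Sum.elim
      (fun v => if (v:ℕ) = 0 then a
        else if h : n < (v:ℕ) then ((ψ ⟨v, h⟩ : {x // x ∈ C}) : ℕ)
        else t - 1 + (v:ℕ))
      (fun e => s - (t - 1 + ((eLeaf n l e.1) : ℕ))) with hf
  -- value lemmas
  have hcenter : f (Sum.inl 0) = a := by simp [hf]
  have hleaf : ∀ v : Fin (n+l+1), 1 ≤ (v:ℕ) → (v:ℕ) ≤ n →
      f (Sum.inl v) = t - 1 + (v:ℕ) := by
    intro v h1 h2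
    simp only [hf, Sum.elim_inl]
    rw [if_neg (by omega), dif_neg (by omega)]
  have hiso : ∀ (v : Fin (n+l+1)) (h : n < (v:ℕ)),
      f (Sum.inl v) = ((ψ ⟨v, h⟩ : {x // x ∈ C}) : ℕ) ∧ f (Sum.inl v) ∈ C := by
    intro v h
    have : f (Sum.inl v) = ((ψ ⟨v, h⟩ : {x // x ∈ C}) : ℕ) := by
      simp only [hf, Sum.elim_inl]
      rw [if_neg (by omega), dif_pos h]
    exact ⟨this, this ▸ (ψ ⟨v, h⟩).2⟩
  have hedge : ∀ e : (starUnion n l).edgeSet,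
      ∃ i : ℕ, 1 ≤ i ∧ i ≤ n ∧ f (Sum.inr e) = s - (t - 1 + i)
        ∧ e.1 = s(0, eLeaf n l e.1) ∧ ((eLeaf n l e.1) : ℕ) = i := by
    intro e
    obtain ⟨h1, h2, h3⟩ := eLeaf_spec e.2
    exact ⟨(eLeaf n l e.1 : ℕ), h1, h2, rfl, h3, rfl⟩
  -- maps into Icc
  have hCIcc : ∀ x ∈ C, 1 ≤ x ∧ x ≤ N ∧ x ∉ U := by
    intro x hx
    rw [hC, Finset.mem_sdiff, Finset.mem_Icc] at hx
    exact ⟨hx.1.1, hx.1.2, hx.2⟩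
  have hmaps : ∀ w, 1 ≤ f w ∧ f w ≤ N := by
    rintro (v | e)
    · by_cases h0 : (v:ℕ) = 0
      · have : v = 0 := Fin.ext (by simpa using h0)
        rw [this, hcenter]; omega
      · by_cases hn' : n < (v:ℕ)
        · have := (hiso v hn').2
          have := hCIcc _ this
          omega
        · rw [hleaf v (by omega) (by omega)]
          omega
    · obtain ⟨i, hi1, hi2, hval, _, _⟩ := hedge e
      rw [hval]
      omega
  have classify : ∀ v : Fin (n+l+1),
      (f (Sum.inl v) = a ∧ (v:ℕ) = 0)
      ∨ (f (Sum.inl v) = t-1+(v:ℕ) ∧ 1 ≤ (v:ℕ) ∧ (v:ℕ) ≤ n)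
      ∨ (∃ h : n < (v:ℕ), f (Sum.inl v) = ((ψ ⟨v, h⟩ : {x // x ∈ C}) : ℕ)
          ∧ f (Sum.inl v) ∈ C) := by
    intro v
    by_cases h0 : (v:ℕ) = 0
    · left
      have : v = 0 := Fin.ext (by simpa using h0)
      rw [this, hcenter]
      simpa using h0
    · by_cases hbig : n < (v:ℕ)
      · right; right; exact ⟨hbig, (hiso v hbig).1, (hiso v hbig).2⟩
      · right; left; exact ⟨hleaf v (by omega) (by omega), by omega, by omega⟩
  have hinj : Function.Injective f := by
    rintro (v1 | e1) (v2 | e2) heq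
    · rcases classify v1 with ⟨q1, z1⟩ | ⟨q1, lo1, hi1⟩ | ⟨big1, q1, c1⟩ <;>
        rcases classify v2 with ⟨q2, z2⟩ | ⟨q2, lo2, hi2⟩ | ⟨big2, q2, c2⟩
      · exact congrArg Sum.inl (Fin.ext (by omega))
      · exfalso; rw [q1, q2] at heq; omega
      · exfalso
        have := (hCIcc _ c2).2.2
        rw [← heq, q1] at this
        exact this (by rw [hUmem]; omega)
      · exfalso; rw [q1, q2] at heq; omega
      · exact congrArg Sum.inl (Fin.ext (by omega))
      · exfalso
        have := (hCIcc _ c2).2.2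
        rw [← heq, q1] at this
        exact this (by rw [hUmem]; omega)
      · exfalso
        have := (hCIcc _ c1).2.2
        rw [heq, q2] at this
        exact this (by rw [hUmem]; omega)
      · exfalso
        have := (hCIcc _ c1).2.2
        rw [heq, q2] at this
        exact this (by rw [hUmem]; omega)
      · have : ψ ⟨v1, big1⟩ = ψ ⟨v2, big2⟩ := Subtype.ext (by rw [← q1, ← q2, heq])
        have := ψ.injective this
        exact congrArg Sum.inl (congrArg Subtype.val this)
    · exfalso
      obtain ⟨i, hi1, hi2, hval, _, _⟩ := hedge e2
      rcases classify v1 with ⟨q1, z1⟩ | ⟨q1, lo1, hi1'⟩ | ⟨big1, q1, c1⟩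
      · rw [q1, hval] at heq; omega
      · rw [q1, hval] at heq; omega
      · have := (hCIcc _ c1).2.2
        rw [heq, hval] at this
        exact this (by rw [hUmem]; omega)
    · exfalso
      obtain ⟨i, hi1, hi2, hval, _, _⟩ := hedge e1
      rcases classify v2 with ⟨q2, z2⟩ | ⟨q2, lo2, hi2'⟩ | ⟨big2, q2, c2⟩
      · rw [q2, hval] at heq; omega
      · rw [q2, hval] at heq; omega
      · have := (hCIcc _ c2).2.2
        rw [← heq, hval] at this
        exact this (by rw [hUmem]; omega)
    · obtain ⟨i1, hi11, hi12, hval1, hrep1, hel1⟩ := hedge e1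
      obtain ⟨i2, hi21, hi22, hval2, hrep2, hel2⟩ := hedge e2
      rw [hval1, hval2] at heq
      have : i1 = i2 := by omega
      have hEL : eLeaf n l e1.1 = eLeaf n l e2.1 := Fin.ext (by omega)
      have : e1.1 = e2.1 := by rw [hrep1, hrep2, hEL]
      exact congrArg Sum.inr (Subtype.ext this)
  have hNcard : Fintype.card (Fin (n+l+1)) + (starUnion n l).edgeSet.ncard = N := by
    rw [Fintype.card_fin, edgeSet_ncard]; omega
  refine ⟨f, ?_, ?_⟩
  · rw [hNcard]
    refine ⟨fun w _ => Set.mem_Icc.mpr (hmaps w), hinj.injOn, ?_⟩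
    have hst : (Set.Icc 1 N : Set ℕ).ncard ≤ (Set.univ : Set (Fin (n+l+1) ⊕ (starUnion n l).edgeSet)).ncard := by
      rw [Set.ncard_univ, Nat.card_eq_fintype_card, Fintype.card_sum, Fintype.card_fin,
        edgeSet_fintype_card]
      rw [Set.ncard_eq_toFinset_card', Set.toFinset_Icc, Nat.card_Icc]
      omega
    have hsurj := Set.surj_on_of_inj_on_of_ncard_le
      (s := (Set.univ : Set (Fin (n+l+1) ⊕ (starUnion n l).edgeSet)))
      (t := (Set.Icc 1 N : Set ℕ))
      (fun w _ => f w) (fun w _ => Set.mem_Icc.mpr (hmaps w))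
      (fun w1 w2 _ _ h => hinj h) hst
    intro x hx
    obtain ⟨w, hw, hwx⟩ := hsurj x hx
    exact ⟨w, hw, hwx.symm⟩
  · intro u v h
    rcases h with ⟨h1, h2, h3⟩ | ⟨h1, h2, h3⟩
    · subst h1
      have hv1 : 1 ≤ (v:ℕ) := by
        have : (v : ℕ) ≠ 0 := fun h => h2 (Fin.ext (by simpa using h))
        omega
      rw [hcenter, hleaf v hv1 h3]
      obtain ⟨i, hi1, hi2, hval, hrep, hel⟩ :=
        hedge ⟨s(0, v), (starUnion n l).mem_edgeSet.mpr (Or.inl ⟨rfl, h2, h3⟩)⟩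
      rw [hval]
      have hvel : v = eLeaf n l (s(0, v) : Sym2 (Fin (n+l+1))) := Sym2.congr_right.mp hrep
      have : i = (v : ℕ) := by rw [← hel, ← hvel]
      omega
    · subst h1
      have hu1 : 1 ≤ (u:ℕ) := by
        have : (u : ℕ) ≠ 0 := fun h => h2 (Fin.ext (by simpa using h))
        omega
      rw [hcenter, hleaf u hu1 h3]
      obtain ⟨i, hi1, hi2, hval, hrep, hel⟩ :=
        hedge ⟨s(u, 0), (starUnion n l).mem_edgeSet.mpr (Or.inr ⟨rfl, h2, h3⟩)⟩
      rw [hval]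
      have hswap : (s(u, 0) : Sym2 (Fin (n+l+1))) = s(0, u) := Sym2.eq_swap
      have huel : u = eLeaf n l (s(u, 0) : Sym2 (Fin (n+l+1))) := by
        apply Sym2.congr_right.mp
        rw [← hswap]
        exact hrep
      have : i = (u : ℕ) := by rw [← hel, ← huel]
      omega


/-- For every positive integer `n`, the perfect edge-magic deficiency of the
star `K_{1,n}` is finite: there is a nonnegative integer `l` such that
`K_{1,n} ∪ lK_1` is perfect edge-magic. -/
theorem stmt_18 (n : ℕ) (hn : 1 ≤ n) :
    ∃ l : ℕ, IsPerfectEdgeMagic (starUnion n l) := by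
  refine ⟨2*n, ?_⟩
  intro k h1 h2
  have hNc : Fintype.card (Fin (n+2*n+1)) + (starUnion n (2*n)).edgeSet.ncard
      = 2*n+2*n+1 := by
    rw [Fintype.card_fin, edgeSet_ncard]; omega
  obtain ⟨g1, hg1, hc1⟩ := h1
  obtain ⟨g2, hg2, hc2⟩ := h2
  rw [hNc] at hg1 hg2
  have hb1 := (emAvg_bounds n (2*n) hn g1 hg1).1
  have hb2 := (emAvg_bounds n (2*n) hn g2 hg2).2
  have hk1 : 2*n+4 ≤ k := by
    have h := le_trans hb1 (Int.le_ceil _)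
    have : ((2*n+4 : ℕ) : ℤ) ≤ ⌈emAvg (starUnion n (2*n)) g1⌉ := by exact_mod_cast h
    have := le_trans this hc1
    exact_mod_cast this
  have hk2 : k ≤ 10*n+2 := by
    have h := le_trans (Int.floor_le _) hb2
    have : (⌊emAvg (starUnion n (2*n)) g2⌋ : ℚ) ≥ (k : ℚ) := by exact_mod_cast hc2
    have := le_trans this h
    have : (k : ℚ) ≤ ((4*n+3*(2*n)+2 : ℕ) : ℚ) := this
    have : k ≤ 4*n+3*(2*n)+2 := by exact_mod_cast this
    omega
  rcases Nat.lt_or_ge k (4*n+4) with hA | hBC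
  · obtain ⟨f, hf⟩ := construct n (2*n) 1 2 (k-1) hn (by omega) (by omega) (by omega)
      (by omega) (by omega) (by omega)
    refine ⟨f, ?_⟩
    have hks : 1 + (k-1) = k := by omega
    rw [← hks]
    exact hf
  · rcases Nat.lt_or_ge k (6*n+5) with hA2 | hB
    · obtain ⟨f, hf⟩ := construct n (2*n) 1 (k-4*n-2) (k-1) hn (by omega) (by omega)
        (by omega) (by omega) (by omega) (by omega)
      refine ⟨f, ?_⟩
      have hks : 1 + (k-1) = k := by omega
      rw [← hks]
      exact hf
    · rcases Nat.lt_or_ge k (8*n+3) with hB1 | hB2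
      · obtain ⟨f, hf⟩ := construct n (2*n) (4*n+1) 1 (k-4*n-1) hn (by omega) (by omega)
          (by omega) (by omega) (by omega) (by omega)
        refine ⟨f, ?_⟩
        have hks : 4*n+1 + (k-4*n-1) = k := by omega
        rw [← hks]
        exact hf
      · obtain ⟨f, hf⟩ := construct n (2*n) (4*n+1) (k-8*n-1) (k-4*n-1) hn (by omega)
          (by omega) (by omega) (by omega) (by omega) (by omega)
        refine ⟨f, ?_⟩
        have hks : 4*n+1 + (k-4*n-1) = k := by omega
        rw [← hks]
        exact hf
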